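/- For every n ≥ 2 and every ε ∈ {0,1}, every no-three-in-line set S ⊆ C_ε(n) satisfies |S| ≤ 2n − 2. -/

import Mathlib

/-- The `n × n` integer grid `G_n = {0,…,n−1} × {0,…,n−1} ⊆ ℤ²`. -/
noncomputable def grid (n : ℕ) : Finset (ℤ × ℤ) :=
  Finset.Icc (0 : ℤ) ((n : ℤ) - 1) ×ˢ Finset.Icc (0 : ℤ) ((n : ℤ) - 1)

/-- The parity (checkerboard) class `C_ε(n) = {(x,y) ∈ G_n : x + y ≡ ε (mod 2)}`. -/
noncomputable def gridClass (n : ℕ) (ε : ℕ) : Finset (ℤ × ℤ) :=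
  (grid n).filter (fun P => (P.1 + P.2) % 2 = (ε : ℤ))

/-- Three points of `ℤ²` are collinear. -/
def Collinear3 (P Q R : ℤ × ℤ) : Prop :=
  (Q.1 - P.1) * (R.2 - P.2) = (R.1 - P.1) * (Q.2 - P.2)

/-- A finite set is no-three-in-line if no three distinct points of it are collinear. -/
def NTIL (S : Finset (ℤ × ℤ)) : Prop :=
  ∀ P ∈ S, ∀ Q ∈ S, ∀ R ∈ S, P ≠ Q → P ≠ R → Q ≠ R → ¬ Collinear3 P Q R

/-- Any fiber of the antidiagonal map `P ↦ P.1 + P.2` on an NTIL set has ≤ 2 points. -/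
lemma fiber_le_two (S : Finset (ℤ × ℤ)) (hNTIL : NTIL S) (c : ℤ) :
    (S.filter (fun P => P.1 + P.2 = c)).card ≤ 2 := by
  by_contra h
  push_neg at h
  obtain ⟨P, hP, Q, hQ, R, hR, hPQ, hPR, hQR⟩ := Finset.two_lt_card.mp h
  simp only [Finset.mem_filter] at hP hQ hR
  exact hNTIL P hP.1 Q hQ.1 R hR.1 hPQ hPR hQR (by
    unfold Collinear3
    linear_combination (R.2 - P.2) * hQ.2 - (Q.2 - P.2) * hR.2 + (Q.2 - R.2) * hP.2)

lemma grid_mem (n : ℕ) (ε : ℕ) {P : ℤ × ℤ} (h : P ∈ gridClass n ε) :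
    0 ≤ P.1 ∧ P.1 ≤ (n : ℤ) - 1 ∧ 0 ≤ P.2 ∧ P.2 ≤ (n : ℤ) - 1 ∧
      (P.1 + P.2) % 2 = (ε : ℤ) := by
  simp only [gridClass, grid, Finset.mem_filter, Finset.mem_product, Finset.mem_Icc] at h
  tauto

/-- For every `n ≥ 2` and `ε ∈ {0,1}`, every no-three-in-line set `S ⊆ C_ε(n)`
satisfies `|S| ≤ 2n − 2`. -/
theorem ntil_mono_le_two_n_sub_two (n : ℕ) (hn : 2 ≤ n) (ε : ℕ) (hε : ε ≤ 1)
    (S : Finset (ℤ × ℤ)) (hS : S ⊆ gridClass n ε) (hNTIL : NTIL S) :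
    S.card ≤ 2 * n - 2 := by
  interval_cases ε
  · -- ε = 0 : split off the two corner antidiagonals
    set T := S.filter (fun P => P.1 + P.2 = 0 ∨ P.1 + P.2 = 2 * (n : ℤ) - 2) with hT
    set U := S.filter (fun P => ¬(P.1 + P.2 = 0 ∨ P.1 + P.2 = 2 * (n : ℤ) - 2)) with hU
    have hsplit : T.card + U.card = S.card := Finset.card_filter_add_card_filter_not _
    have hTcard : T.card ≤ 2 := by
      have hsub : T ⊆ {((0 : ℤ), (0 : ℤ)), (((n : ℤ) - 1), ((n : ℤ) - 1))} := by
        intro P hP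
        rw [hT, Finset.mem_filter] at hP
        obtain ⟨h1, h2, h3, h4, h5⟩ := grid_mem n 0 (hS hP.1)
        simp only [Finset.mem_insert, Finset.mem_singleton]
        rcases hP.2 with h | h
        · left; exact Prod.ext (by omega) (by omega)
        · right; exact Prod.ext (by omega) (by omega)
      calc T.card ≤ _ := Finset.card_le_card hsub
        _ ≤ 2 := Finset.card_insert_le _ _ |>.trans (by simp)
    have hUNTIL : NTIL U := by
      intro P hP Q hQ R hR
      exact hNTIL P (Finset.filter_subset _ _ hP) Q (Finset.filter_subset _ _ hQ)
        R (Finset.filter_subset _ _ hR)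
    have hUcard : U.card ≤ 2 * (n - 2) := by
      have := Finset.card_le_mul_card_image_of_maps_to
        (f := fun P : ℤ × ℤ => P.1 + P.2) (s := U)
        (t := (Finset.Icc (0 : ℤ) ((n : ℤ) - 3)).image (fun k => 2 * k + 2))
        (by
          intro P hP
          rw [hU, Finset.mem_filter] at hP
          obtain ⟨h1, h2, h3, h4, h5⟩ := grid_mem n 0 (hS hP.1)
          simp only [Finset.mem_image, Finset.mem_Icc]
          refine ⟨(P.1 + P.2) / 2 - 1, ?_, ?_⟩ <;> omega)
        2
        (by
          intro b _
          exact fiber_le_two U hUNTIL b)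
      calc U.card ≤ _ := this
        _ ≤ 2 * (Finset.Icc (0 : ℤ) ((n : ℤ) - 3)).card := by
            exact Nat.mul_le_mul_left _ Finset.card_image_le
        _ ≤ 2 * (n - 2) := by
            rw [Int.card_Icc]
            omega
    omega
  · -- ε = 1 : all antidiagonals are interior
    have := Finset.card_le_mul_card_image_of_maps_to
      (f := fun P : ℤ × ℤ => P.1 + P.2) (s := S)
      (t := (Finset.Icc (0 : ℤ) ((n : ℤ) - 2)).image (fun k => 2 * k + 1))
      (by
        intro P hP
        obtain ⟨h1, h2, h3, h4, h5⟩ := grid_mem n 1 (hS hP)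
        simp only [Finset.mem_image, Finset.mem_Icc]
        refine ⟨(P.1 + P.2) / 2, ?_, ?_⟩ <;> omega)
      2
      (fun b _ => fiber_le_two S hNTIL b)
    calc S.card ≤ _ := this
      _ ≤ 2 * (Finset.Icc (0 : ℤ) ((n : ℤ) - 2)).card := by
          exact Nat.mul_le_mul_left _ Finset.card_image_le
      _ ≤ 2 * n - 2 := by
          rw [Int.card_Icc]
          omega
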